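/- arXiv:alg-geom/9710009 — 3 statements merged into one kernel-verified Lean document; each statement's English description precedes it below -/
import Mathlib

section
/- Let E be an elliptic curve and L_1, L_2 degree-3 line bundles on E pulled back to X = E × E via the two projections, with q: X → S the quotient by the swap involution ι and L the line bundle on S with q^*L = L_1 ⊠ L_2 (where L_1 = L_2 = O_E(3P)). Then the multiplication map H^0(q^*L)^ι ⊗ H^0(q^*L)^ι → H^0(q^*(2L))^ι on ι-invariant sections is surjective; consequently H^0(S,L) ⊗ H^0(S,L) → H^0(S,2L) is surjective. -/
open Module

/-- The section `aᵢ ⊗ bⱼ = p₁*αᵢ · p₂*αⱼ` on `E × E`, in a trivialization where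
sections are functions. -/
def tensorSec (E : Type) (α : Fin 3 → E → ℂ) (i j : Fin 3) : E × E → ℂ :=
  fun p => α i p.1 * α j p.2

/-- Invariance under the swap involution `ι(x,y) = (y,x)`. -/
def SwapInvariant (E : Type) (f : E × E → ℂ) : Prop :=
  ∀ x y : E, f (x, y) = f (y, x)

/-- `H⁰(q*L) = H⁰(3P) ⊠ H⁰(3P)`, the span of the `aᵢ ⊗ bⱼ`. -/
noncomputable def H0qL (E : Type) (α : Fin 3 → E → ℂ) : Submodule ℂ (E × E → ℂ) :=
  Submodule.span ℂ (Set.range fun ij : Fin 3 × Fin 3 => tensorSec E α ij.1 ij.2)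

/-- `H⁰(O_E(6P))`, the span of the products `αᵢ·αⱼ` (the multiplication map
`H⁰(3P) ⊗ H⁰(3P) → H⁰(6P)` is surjective since `deg = 3 ≥ 2g(E)+1`). -/
noncomputable def H0sixP (E : Type) (α : Fin 3 → E → ℂ) : Submodule ℂ (E → ℂ) :=
  Submodule.span ℂ (Set.range fun ij : Fin 3 × Fin 3 => α ij.1 * α ij.2)

/-- `H⁰(q*(2L)) = H⁰(6P) ⊠ H⁰(6P)`. -/
noncomputable def H0q2L (E : Type) (α : Fin 3 → E → ℂ) : Submodule ℂ (E × E → ℂ) :=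
  Submodule.span ℂ
    {f | ∃ u ∈ H0sixP E α, ∃ v ∈ H0sixP E α, f = fun p : E × E => u p.1 * v p.2}

namespace InvMultAux

/-- Enumeration of the 6 unordered pairs from `Fin 3`. -/
def idx6 : Fin 6 → Fin 3 × Fin 3
  | 0 => (0, 0) | 1 => (0, 1) | 2 => (0, 2) | 3 => (1, 1) | 4 => (1, 2) | 5 => (2, 2)

lemma idx6_surj : ∀ ij : Fin 3 × Fin 3, ∃ k, idx6 k = ij ∨ idx6 k = (ij.2, ij.1) := by
  decide

/-- The 6 products `αᵢαⱼ`, `i ≤ j`. -/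
def u6 (E : Type) (α : Fin 3 → E → ℂ) : Fin 6 → E → ℂ :=
  fun k => α (idx6 k).1 * α (idx6 k).2

lemma u6_mem (E : Type) (α : Fin 3 → E → ℂ) (k : Fin 6) : u6 E α k ∈ H0sixP E α :=
  Submodule.subset_span ⟨idx6 k, rfl⟩

lemma span_u6 (E : Type) (α : Fin 3 → E → ℂ) :
    Submodule.span ℂ (Set.range (u6 E α)) = H0sixP E α := by
  apply le_antisymm
  · rw [Submodule.span_le]
    rintro _ ⟨k, rfl⟩
    exact u6_mem E α k
  · rw [H0sixP, Submodule.span_le]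
    rintro _ ⟨ij, rfl⟩
    obtain ⟨k, hk | hk⟩ := idx6_surj ij
    · exact Submodule.subset_span ⟨k, by simp [u6, hk]⟩
    · refine Submodule.subset_span ⟨k, ?_⟩
      simp only [u6, hk]
      exact mul_comm _ _
  -- done

lemma indep_u6 (E : Type) (α : Fin 3 → E → ℂ) (hmult : finrank ℂ (H0sixP E α) = 6) :
    LinearIndependent ℂ (u6 E α) := by
  rw [linearIndependent_iff_card_eq_finrank_span]
  rw [Set.finrank, span_u6, hmult]
  simp

/-- The 36 products `u_a(x)·u_b(y)` on `E × E`. -/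
def T (E : Type) (α : Fin 3 → E → ℂ) : Fin 6 × Fin 6 → E × E → ℂ :=
  fun ab p => u6 E α ab.1 p.1 * u6 E α ab.2 p.2

lemma indep_T (E : Type) (α : Fin 3 → E → ℂ) (hmult : finrank ℂ (H0sixP E α) = 6) :
    LinearIndependent ℂ (T E α) := by
  have hu := (Fintype.linearIndependent_iff).mp (indep_u6 E α hmult)
  rw [Fintype.linearIndependent_iff]
  intro g hg ab
  have h1 : ∀ y : E, ∀ a : Fin 6, (∑ b : Fin 6, g (a, b) * u6 E α b y) = 0 := by
    intro y
    apply hu (fun a => ∑ b : Fin 6, g (a, b) * u6 E α b y)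
    funext x
    have h := congrFun hg (x, y)
    simp only [Finset.sum_apply, Pi.smul_apply, smul_eq_mul, Pi.zero_apply, T] at h ⊢
    rw [Fintype.sum_prod_type] at h
    rw [← h]
    apply Finset.sum_congr rfl
    intro a _
    rw [Finset.sum_mul]
    apply Finset.sum_congr rfl
    intro b _
    ring
  have h2 : ∀ b : Fin 6, g (ab.1, b) = 0 := by
    apply hu (fun b => g (ab.1, b))
    funext y
    simpa [smul_eq_mul] using h1 y ab.1
  simpa using h2 ab.2

lemma T_mem (E : Type) (α : Fin 3 → E → ℂ) (ab : Fin 6 × Fin 6) :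
    T E α ab ∈ H0q2L E α :=
  Submodule.subset_span ⟨u6 E α ab.1, u6_mem E α ab.1, u6 E α ab.2, u6_mem E α ab.2, rfl⟩

lemma span_T (E : Type) (α : Fin 3 → E → ℂ) :
    Submodule.span ℂ (Set.range (T E α)) = H0q2L E α := by
  apply le_antisymm
  · rw [Submodule.span_le]
    rintro _ ⟨ab, rfl⟩
    exact T_mem E α ab
  · rw [H0q2L, Submodule.span_le]
    rintro _ ⟨u, hu, v, hv, rfl⟩
    rw [← span_u6] at hu hv
    obtain ⟨c, hc⟩ := (Submodule.mem_span_range_iff_exists_fun ℂ).mp hu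
    obtain ⟨d, hd⟩ := (Submodule.mem_span_range_iff_exists_fun ℂ).mp hv
    have : (fun p : E × E => u p.1 * v p.2)
        = ∑ ab : Fin 6 × Fin 6, (c ab.1 * d ab.2) • T E α ab := by
      funext p
      simp only [Finset.sum_apply, Pi.smul_apply, smul_eq_mul, T]
      rw [← hc, ← hd]
      simp only [Finset.sum_apply, Pi.smul_apply, smul_eq_mul]
      rw [Finset.sum_mul_sum, Fintype.sum_prod_type]
      apply Finset.sum_congr rfl
      intro a _
      apply Finset.sum_congr rfl
      intro b _
      ring
    rw [this]
    exact Submodule.sum_mem _ fun ab _ =>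
      Submodule.smul_mem _ _ (Submodule.subset_span ⟨ab, rfl⟩)

/-- The invariant sections `s_{ik}(x,y) = αᵢ(x)αₖ(y) + αₖ(x)αᵢ(y)`. -/
def sInv (E : Type) (α : Fin 3 → E → ℂ) (i k : Fin 3) : E × E → ℂ :=
  fun p => α i p.1 * α k p.2 + α k p.1 * α i p.2

lemma sInv_mem (E : Type) (α : Fin 3 → E → ℂ) (i k : Fin 3) :
    sInv E α i k ∈ H0qL E α := by
  have : sInv E α i k = tensorSec E α i k + tensorSec E α k i := by
    funext p; simp [sInv, tensorSec]
  rw [this]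
  exact Submodule.add_mem _ (Submodule.subset_span ⟨(i, k), rfl⟩)
    (Submodule.subset_span ⟨(k, i), rfl⟩)

lemma sInv_swap (E : Type) (α : Fin 3 → E → ℂ) (i k : Fin 3) :
    SwapInvariant E (sInv E α i k) := by
  intro x y; simp [sInv]; ring

end InvMultAux

open InvMultAux

/-- The multiplication map on `ι`-invariant sections
`H⁰(q*L)^ι ⊗ H⁰(q*L)^ι → H⁰(q*(2L))^ι` is surjective: every invariant element
of `H⁰(q*(2L))` lies in the span of products of invariant elements of `H⁰(q*L)`.
Consequently `H⁰(S,L) ⊗ H⁰(S,L) → H⁰(S,2L)` is surjective for the quotient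
surface `S = (E×E)/ι`. -/
theorem invariant_multiplication_surjective
    (E : Type) (α : Fin 3 → E → ℂ)
    (hindep : LinearIndependent ℂ α)
    (hmult : finrank ℂ (H0sixP E α) = 6) :
    ∀ f : E × E → ℂ, f ∈ H0q2L E α → SwapInvariant E f →
      f ∈ Submodule.span ℂ
        {h : E × E → ℂ | ∃ f₁ ∈ H0qL E α, ∃ f₂ ∈ H0qL E α,
          SwapInvariant E f₁ ∧ SwapInvariant E f₂ ∧ h = f₁ * f₂} := by
  intro f hf hsym
  set G := Submodule.span ℂ
      {h : E × E → ℂ | ∃ f₁ ∈ H0qL E α, ∃ f₂ ∈ H0qL E α,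
        SwapInvariant E f₁ ∧ SwapInvariant E f₂ ∧ h = f₁ * f₂} with hG
  -- products of invariant sections lie in G
  have hprod : ∀ i j k l : Fin 3, sInv E α i k * sInv E α j l ∈ G :=
    fun i j k l => Submodule.subset_span
      ⟨sInv E α i k, sInv_mem E α i k, sInv E α j l, sInv_mem E α j l,
        sInv_swap E α i k, sInv_swap E α j l, rfl⟩
  -- the symmetrized tensors lie in G
  have hsymT : ∀ a b : Fin 6, T E α (a, b) + T E α (b, a) ∈ G := by
    intro a b
    have key : T E α (a, b) + T E α (b, a)
        = (1/2 : ℂ) • (sInv E α (idx6 a).1 (idx6 b).1 * sInv E α (idx6 a).2 (idx6 b).2)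
          + (1/2 : ℂ) • (sInv E α (idx6 a).1 (idx6 b).2 * sInv E α (idx6 a).2 (idx6 b).1)
          - (1/2 : ℂ) • (sInv E α (idx6 a).1 (idx6 a).2 * sInv E α (idx6 b).1 (idx6 b).2) := by
      funext p
      simp only [T, u6, sInv, Pi.add_apply, Pi.sub_apply, Pi.smul_apply, Pi.mul_apply,
        smul_eq_mul]
      ring
    rw [key]
    exact Submodule.sub_mem _
      (Submodule.add_mem _ (Submodule.smul_mem _ _ (hprod _ _ _ _))
        (Submodule.smul_mem _ _ (hprod _ _ _ _)))
      (Submodule.smul_mem _ _ (hprod _ _ _ _))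
  -- expand f in the basis T
  rw [← span_T] at hf
  obtain ⟨c, hc⟩ := (Submodule.mem_span_range_iff_exists_fun ℂ).mp hf
  have hswap : ∑ ab : Fin 6 × Fin 6, c (ab.2, ab.1) • T E α ab = f := by
    have e1 : ∑ ab : Fin 6 × Fin 6, c (ab.2, ab.1) • T E α ab
        = ∑ ab : Fin 6 × Fin 6, c ab • T E α (ab.2, ab.1) := by
      refine Fintype.sum_equiv (Equiv.prodComm _ _) _ _ (fun ab => ?_)
      simp [Equiv.prodComm, Prod.swap]
    rw [e1]
    funext p
    have h2 := congrFun hc (p.2, p.1)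
    simp only [Finset.sum_apply, Pi.smul_apply, smul_eq_mul, T] at h2 ⊢
    rw [show f p = f (p.2, p.1) from hsym p.1 p.2, ← h2]
    exact Finset.sum_congr rfl fun x _ => by ring
  have hcsym : ∀ ab : Fin 6 × Fin 6, c ab = c (ab.2, ab.1) := by
    intro ab
    have hz := Fintype.linearIndependent_iff.mp (indep_T E α hmult)
      (fun ab => c ab - c (ab.2, ab.1)) ?_ ab
    · exact sub_eq_zero.mp hz
    · simp only [sub_smul, Finset.sum_sub_distrib, hc, hswap, sub_self]
  have hfe : f = ∑ ab : Fin 6 × Fin 6, (c ab / 2) • (T E α (ab.1, ab.2) + T E α (ab.2, ab.1)) := by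
    have e1 : ∑ ab : Fin 6 × Fin 6, (c ab / 2) • T E α (ab.2, ab.1)
        = ∑ ab : Fin 6 × Fin 6, (c (ab.2, ab.1) / 2) • T E α ab := by
      refine Fintype.sum_equiv (Equiv.prodComm _ _) _ _ (fun ab => ?_)
      simp [Equiv.prodComm, Prod.swap]
    simp only [smul_add, Finset.sum_add_distrib, e1]
    rw [← hc, ← Finset.sum_add_distrib]
    apply Finset.sum_congr rfl
    intro ab _
    rw [← hcsym ab, ← add_smul]
    have h3 : c ab / 2 + c ab / 2 = c ab := by ring
    rw [h3]
  rw [hfe]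
  exact Submodule.sum_mem _ fun ab _ => Submodule.smul_mem _ _ (hsymT ab.1 ab.2)
end

section
/- Let E be a rank-2 vector bundle of degree 9 on a smooth curve C of genus 2 such that the tautological bundle on P(E) is very ample. Then E is stable, μ^-(E) = 9/2 > 4 = 2g, and hence (P(E), O_{P(E)}(1)) is projectively normal. -/
/-- A rank-2 vector bundle `E` of degree `9` on a smooth genus-2 curve whose
tautological bundle on `ℙ(E)` is very ample is stable (every line bundle
quotient has degree `> 9/2`), has `μ⁻(E) = 9/2 > 4 = 2g`, and hence
`(ℙ(E), O_{ℙ(E)}(1))` is projectively normal. -/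
theorem genus_two_scroll_projectively_normal
    (Pic : Type) (degL : Pic → ℤ)
    (VeryAmpleLB : Pic → Prop)
    -- `IsLBQuotient Q` : `Q` is a line bundle quotient `E → Q → 0`
    (IsLBQuotient : Pic → Prop)
    -- very ampleness of the tautological bundle makes every line bundle quotient very ample
    (hq : ∀ Q : Pic, IsLBQuotient Q → VeryAmpleLB Q)
    -- a very ample line bundle on a genus-2 curve has degree ≥ 5
    (hva5 : ∀ Q : Pic, VeryAmpleLB Q → 5 ≤ degL Q)
    (muMinus : ℚ)
    (hmuLB : ∀ Q : Pic, IsLBQuotient Q → muMinus ≤ (degL Q : ℚ))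
    (hmuE : muMinus ≤ 9 / 2)  -- `E` is a quotient of itself, `μ(E) = 9/2`
    (hmuAtt : muMinus = 9 / 2 ∨ ∃ Q : Pic, IsLBQuotient Q ∧ muMinus = (degL Q : ℚ))
    (ProjectivelyNormal : Prop)
    -- Butler's criterion: `μ⁻(E) > 2g = 4` implies projective normality
    (hButler : (4 : ℚ) < muMinus → ProjectivelyNormal) :
    (∀ Q : Pic, IsLBQuotient Q → (9 : ℚ) / 2 < (degL Q : ℚ)) ∧
      muMinus = 9 / 2 ∧ (4 : ℚ) < muMinus ∧ ProjectivelyNormal := by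
  have hstab : ∀ Q : Pic, IsLBQuotient Q → (9 : ℚ) / 2 < (degL Q : ℚ) := by
    intro Q hQ
    have h5 : (5 : ℤ) ≤ degL Q := hva5 Q (hq Q hQ)
    have : (5 : ℚ) ≤ (degL Q : ℚ) := by exact_mod_cast h5
    linarith
  have hmu : muMinus = 9 / 2 := by
    rcases hmuAtt with h | ⟨Q, hQ, hEq⟩
    · exact h
    · exfalso
      have := hstab Q hQ
      have h5 : (5 : ℤ) ≤ degL Q := hva5 Q (hq Q hQ)
      have : (5 : ℚ) ≤ (degL Q : ℚ) := by exact_mod_cast h5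
      linarith
  have h4 : (4 : ℚ) < muMinus := by rw [hmu]; norm_num
  exact ⟨hstab, hmu, h4, hButler h4⟩
end

section
/- There is no integer solution (a, b, a_1, a_2, a_3) with a ≥ 2 and 2b ≥ -a to the system: 4a + 2b - (a_1+a_2+a_3) = 1 and 2 + a(a-1) + 2b(a-1) - Σa_i(a_i - 1) = 0, together with Σa_i^2 ≥ (4a+2b-1)^2/3. Equivalently, the inequality 4b(b-1) + 13a(a-1) + 10ab - 4a - 2 ≤ 0 has no integer solutions with a ≥ 2 and 2b ≥ -a. -/
/-- The arithmetic core of the classification of lines on the blown-up elliptic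
`ℙ¹`-bundle: there is no integer solution `(a, b, a₁, a₂, a₃)` with `a ≥ 2` and
`2b ≥ -a` of the system `4a + 2b - (a₁+a₂+a₃) = 1`,
`2 + a(a-1) + 2b(a-1) - ∑ aᵢ(aᵢ-1) = 0` and `∑ aᵢ² ≥ (4a+2b-1)²/3`;
equivalently, `4b(b-1) + 13a(a-1) + 10ab - 4a - 2 ≤ 0` has no integer solution
with `a ≥ 2` and `2b ≥ -a`. -/
theorem no_lines_arithmetic :
    (¬ ∃ a b a₁ a₂ a₃ : ℤ, 2 ≤ a ∧ -a ≤ 2 * b ∧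
        4 * a + 2 * b - (a₁ + a₂ + a₃) = 1 ∧
        2 + a * (a - 1) + 2 * b * (a - 1) -
          (a₁ * (a₁ - 1) + a₂ * (a₂ - 1) + a₃ * (a₃ - 1)) = 0 ∧
        (4 * a + 2 * b - 1) ^ 2 ≤ 3 * (a₁ ^ 2 + a₂ ^ 2 + a₃ ^ 2)) ∧
    (¬ ∃ a b : ℤ, 2 ≤ a ∧ -a ≤ 2 * b ∧
        4 * b * (b - 1) + 13 * a * (a - 1) + 10 * a * b - 4 * a - 2 ≤ 0) := by
  have key : ∀ a b : ℤ, 2 ≤ a → -a ≤ 2 * b →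
      ¬ (4 * b * (b - 1) + 13 * a * (a - 1) + 10 * a * b - 4 * a - 2 ≤ 0) := by
    intro a b ha hb h
    nlinarith [sq_nonneg (2*b + 5*a - 2), sq_nonneg (2*b + a), mul_nonneg (sub_nonneg.2 ha) (sub_nonneg.2 ha), sq_nonneg (a - 2), sq_nonneg (2*b + 4)]
  constructor
  · rintro ⟨a, b, a₁, a₂, a₃, ha, hb, h1, h2, h3⟩
    exact key a b ha hb (by nlinarith)
  · rintro ⟨a, b, ha, hb, h⟩
    exact key a b ha hb h
end
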